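/- Let T be an ergodic measure-preserving automorphism of a probability space (X, ℬ, μ) and A ∈ ℬ. For every θ, γ, τ > 0 there exist N ∈ ℕ and a set Z ∈ ℬ with μ(Z) > 1 − γ such that for all M, L ∈ ℕ with M, L > N and L/M > τ, and all x ∈ Z: |(1/L)·∑_{j=M}^{M+L} χ_A(T^j x) − μ(A)| < θ. -/

import Mathlib

open MeasureTheory Filter Set Topology

namespace Stmt10Aux

set_option linter.unusedSectionVars false

variable {X : Type*} [MeasurableSpace X] {μ : Measure X} {T : X → X} {f : X → ℝ}

/-- Partial maxima of Birkhoff sums, with `0` included. -/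
noncomputable def maxSum (T : X → X) (f : X → ℝ) : ℕ → X → ℝ
  | 0 => fun _ => 0
  | n + 1 => fun x => max (maxSum T f n x) (birkhoffSum T f (n + 1) x)

lemma maxSum_zero (x : X) : maxSum T f 0 x = 0 := rfl

lemma maxSum_succ (n : ℕ) (x : X) :
    maxSum T f (n + 1) x = max (maxSum T f n x) (birkhoffSum T f (n + 1) x) := rfl

lemma maxSum_nonneg (n : ℕ) (x : X) : 0 ≤ maxSum T f n x := by
  induction n with
  | zero => exact le_refl _
  | succ n ih => exact ih.trans (le_max_left _ _)

lemma maxSum_le_succ (n : ℕ) (x : X) : maxSum T f n x ≤ maxSum T f (n + 1) x :=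
  le_max_left _ _

lemma birkhoffSum_le_maxSum {k n : ℕ} (hk : k ≤ n) (x : X) :
    birkhoffSum T f k x ≤ maxSum T f n x := by
  induction n with
  | zero =>
    interval_cases k
    simp [birkhoffSum_zero, maxSum_zero]
  | succ n ih =>
    rcases Nat.lt_or_ge k (n + 1) with h | h
    · exact (ih (Nat.lt_succ_iff.mp h)).trans (maxSum_le_succ n x)
    · have : k = n + 1 := le_antisymm hk h
      subst this
      exact le_max_right _ _

lemma maxSum_succ_le (n : ℕ) (x : X) :
    maxSum T f (n + 1) x ≤ max 0 (f x + maxSum T f n (T x)) := by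
  induction n with
  | zero =>
    rw [maxSum_succ, maxSum_zero, birkhoffSum_one]
    simp [maxSum_zero]
  | succ n ih =>
    rw [maxSum_succ]
    apply max_le
    · exact ih.trans (max_le_max le_rfl (add_le_add le_rfl (maxSum_le_succ n (T x))))
    · have h1 : birkhoffSum T f (n + 2) x = f x + birkhoffSum T f (n + 1) (T x) :=
        birkhoffSum_succ' T f (n + 1) x
      rw [h1]
      exact le_max_of_le_right (add_le_add le_rfl (birkhoffSum_le_maxSum le_rfl (T x)))

lemma measurable_birkhoffSum (hT : Measurable T) (hf : Measurable f) (n : ℕ) :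
    Measurable (birkhoffSum T f n) := by
  apply Finset.measurable_sum
  intro i _
  exact hf.comp (hT.iterate i)

lemma measurable_maxSum (hT : Measurable T) (hf : Measurable f) (n : ℕ) :
    Measurable (maxSum T f n) := by
  induction n with
  | zero => exact measurable_const
  | succ n ih => exact ih.max (measurable_birkhoffSum hT hf (n + 1))

lemma integrable_comp_iterate (hT : MeasurePreserving T μ μ) (hf : Measurable f)
    (hfi : Integrable f μ) (k : ℕ) : Integrable (fun x => f (T^[k] x)) μ := by
  have h : MeasurePreserving (T^[k]) μ μ := hT.iterate k
  exact (h.integrable_comp hf.aestronglyMeasurable).mpr hfi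

lemma integrable_birkhoffSum (hT : MeasurePreserving T μ μ) (hf : Measurable f)
    (hfi : Integrable f μ) (n : ℕ) : Integrable (birkhoffSum T f n) μ := by
  have : Integrable (fun x => ∑ k ∈ Finset.range n, f (T^[k] x)) μ :=
    integrable_finset_sum _ fun k _ => integrable_comp_iterate hT hf hfi k
  exact this

lemma integrable_maxSum [IsFiniteMeasure μ] (hT : MeasurePreserving T μ μ) (hf : Measurable f)
    (hfi : Integrable f μ) (n : ℕ) : Integrable (maxSum T f n) μ := by
  induction n with
  | zero => exact integrable_const 0
  | succ n ih =>
    have h := ih.sup (integrable_birkhoffSum hT hf hfi (n + 1))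
    apply h.congr
    filter_upwards with x
    rfl

/-- Maximal ergodic theorem (Garsia's proof). -/
lemma maximal_ergodic [IsFiniteMeasure μ] (hT : MeasurePreserving T μ μ) (hf : Measurable f)
    (hfi : Integrable f μ) :
    0 ≤ ∫ x in {x | ∃ n, 0 < birkhoffSum T f n x}, f x ∂μ := by
  set S := fun n => birkhoffSum T f n
  set E : ℕ → Set X := fun n => {x | 0 < maxSum T f (n + 1) x} with hE
  have hEmeas : ∀ n, MeasurableSet (E n) := fun n =>
    measurableSet_lt measurable_const (measurable_maxSum hT.measurable hf (n + 1))
  have hEmono : Monotone E := by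
    intro m n hmn x hx
    exact lt_of_lt_of_le hx (monotone_nat_of_le_succ (fun k => maxSum_le_succ k x)
      (Nat.succ_le_succ hmn))
  have hUnion : (⋃ n, E n) = {x | ∃ n, 0 < birkhoffSum T f n x} := by
    ext x
    simp only [mem_iUnion, mem_setOf_eq, hE]
    constructor
    · rintro ⟨n, hn⟩
      -- from positivity of a max, some Birkhoff sum is positive
      clear hEmeas hEmono
      induction n with
      | zero =>
        rw [maxSum_succ, maxSum_zero] at hn
        rcases max_choice 0 (birkhoffSum T f 1 x) with h | h <;> rw [h] at hn
        · exact absurd hn (lt_irrefl 0)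
        · exact ⟨1, hn⟩
      | succ n ih =>
        rw [maxSum_succ] at hn
        rcases max_choice (maxSum T f (n + 1) x) (birkhoffSum T f (n + 2) x) with h | h <;>
          rw [h] at hn
        · exact ih hn
        · exact ⟨n + 2, hn⟩
    · rintro ⟨n, hn⟩
      rcases n with _ | m
      · rw [birkhoffSum_zero] at hn; exact absurd hn (lt_irrefl 0)
      · exact ⟨m, lt_of_lt_of_le hn (birkhoffSum_le_maxSum le_rfl x)⟩
  -- integral over each E n is nonneg
  have key : ∀ n, 0 ≤ ∫ x in E n, f x ∂μ := by
    intro n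
    have hMn1 : Integrable (maxSum T f (n + 1)) μ := integrable_maxSum hT hf hfi (n + 1)
    have hMn : Integrable (maxSum T f n) μ := integrable_maxSum hT hf hfi n
    have hMnT : Integrable (fun x => maxSum T f n (T x)) μ :=
      (hT.integrable_comp (measurable_maxSum hT.measurable hf n).aestronglyMeasurable).mpr
        (integrable_maxSum hT hf hfi n)
    have hptwise : ∀ x ∈ E n, maxSum T f (n + 1) x - maxSum T f n (T x) ≤ f x := by
      intro x hx
      have h1 : maxSum T f (n + 1) x ≤ max 0 (f x + maxSum T f n (T x)) := maxSum_succ_le n x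
      have hx' : 0 < maxSum T f (n + 1) x := hx
      have h2 : maxSum T f (n + 1) x ≤ f x + maxSum T f n (T x) := by
        rcases le_max_iff.mp h1 with h | h
        · linarith
        · exact h
      linarith
    have step1 : ∫ x in E n, (maxSum T f (n + 1) x - maxSum T f n (T x)) ∂μ
        ≤ ∫ x in E n, f x ∂μ := by
      apply setIntegral_mono_on
      · exact (hMn1.sub hMnT).integrableOn
      · exact hfi.integrableOn
      · exact hEmeas n
      · exact hptwise
    have step2 : ∫ x in E n, (maxSum T f (n + 1) x - maxSum T f n (T x)) ∂μ
        = ∫ x in E n, maxSum T f (n + 1) x ∂μ - ∫ x in E n, maxSum T f n (T x) ∂μ :=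
      integral_sub hMn1.integrableOn hMnT.integrableOn
    have step3 : ∫ x in E n, maxSum T f (n + 1) x ∂μ = ∫ x, maxSum T f (n + 1) x ∂μ := by
      rw [← integral_indicator (hEmeas n)]
      apply integral_congr_ae
      filter_upwards with x
      by_cases hx : x ∈ E n
      · simp [indicator_of_mem hx]
      · have h0 : maxSum T f (n + 1) x ≤ 0 := not_lt.mp hx
        have h0' : 0 ≤ maxSum T f (n + 1) x := maxSum_nonneg _ _
        simp [indicator_of_notMem hx, le_antisymm h0 h0']
    have step4 : ∫ x in E n, maxSum T f n (T x) ∂μ ≤ ∫ x, maxSum T f n (T x) ∂μ := by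
      apply setIntegral_le_integral hMnT
      filter_upwards with x
      exact maxSum_nonneg n (T x)
    have step5 : ∫ x, maxSum T f n (T x) ∂μ = ∫ x, maxSum T f n x ∂μ := by
      rw [← integral_map hT.measurable.aemeasurable
        (measurable_maxSum hT.measurable hf n).aestronglyMeasurable, hT.map_eq]
    have step6 : ∫ x, maxSum T f n x ∂μ ≤ ∫ x, maxSum T f (n + 1) x ∂μ :=
      integral_mono hMn hMn1 fun x => maxSum_le_succ n x
    linarith
  -- pass to the limit
  have hInt : IntegrableOn f (⋃ n, E n) μ := hfi.integrableOn
  have hTendsto := tendsto_setIntegral_of_monotone hEmeas hEmono hInt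
  have : 0 ≤ ∫ x in ⋃ n, E n, f x ∂μ := ge_of_tendsto' hTendsto key
  rwa [hUnion] at this


/-- Half of Birkhoff: if `β` exceeds the mean, eventually the averages are below `β`, a.e. -/
lemma eventually_div_lt [IsProbabilityMeasure μ] (hT : Ergodic T μ) (hf : Measurable f)
    (hfi : Integrable f μ) {β : ℝ} (hβ : ∫ x, f x ∂μ < β) :
    ∀ᵐ x ∂μ, ∀ᶠ n in atTop, birkhoffSum T f n x / n < β := by
  set β₀ := ((∫ x, f x ∂μ) + β) / 2 with hβ₀def
  have hβ₀1 : ∫ x, f x ∂μ < β₀ := by rw [hβ₀def]; linarith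
  have hβ₀2 : β₀ < β := by rw [hβ₀def]; linarith
  set g : X → ℝ := fun x => f x - β₀ with hgdef
  have hg : Measurable g := hf.sub measurable_const
  have hgi : Integrable g μ := hfi.sub (integrable_const β₀)
  have hSg : ∀ n x, birkhoffSum T g n x = birkhoffSum T f n x - n * β₀ := by
    intro n x
    simp only [birkhoffSum, hgdef, Finset.sum_sub_distrib, Finset.sum_const, Finset.card_range,
      nsmul_eq_mul]
  have hgint : ∫ x, g x ∂μ < 0 := by
    rw [hgdef, integral_sub hfi (integrable_const β₀), integral_const]
    simp only [probReal_univ, ENNReal.toReal_one, smul_eq_mul, one_mul]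
    linarith
  set Eg : Set X := {x | ∃ n, 0 < birkhoffSum T g n x} with hEgdef
  have hEgmeas : MeasurableSet Eg := by
    have : Eg = ⋃ n, {x | 0 < birkhoffSum T g n x} := by
      ext x; simp [hEgdef]
    rw [this]
    exact MeasurableSet.iUnion fun n =>
      measurableSet_lt measurable_const (measurable_birkhoffSum hT.measurable hg n)
  have hmet := maximal_ergodic hT.toMeasurePreserving hg hgi
  have hcompl : μ Egᶜ ≠ 0 := by
    intro h0
    have hEμ : μ.restrict Eg = μ := by
      rw [Measure.restrict_congr_set (ae_eq_univ.mpr h0), Measure.restrict_univ]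
    rw [show {x | ∃ n, 0 < birkhoffSum T g n x} = Eg from rfl, hEμ] at hmet
    linarith
  -- the union of preimages of `Egᶜ` is almost invariant and has positive measure
  set U : Set X := ⋃ m, T^[m] ⁻¹' Egᶜ with hUdef
  have hUmeas : MeasurableSet U :=
    MeasurableSet.iUnion fun m => hEgmeas.compl.preimage (hT.measurable.iterate m)
  have hUsub : T ⁻¹' U ⊆ U := by
    intro x hx
    rw [hUdef, mem_preimage, mem_iUnion] at hx
    obtain ⟨m, hm⟩ := hx
    rw [hUdef, mem_iUnion]
    refine ⟨m + 1, ?_⟩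
    rw [mem_preimage, Function.iterate_succ_apply]
    exact hm
  have hU1 : ∀ᵐ x ∂μ, x ∈ U := by
    rcases hT.ae_empty_or_univ_of_preimage_ae_le hUmeas.nullMeasurableSet
      (HasSubset.Subset.eventuallyLE hUsub) with h | h
    · exfalso
      apply hcompl
      have hsub : Egᶜ ⊆ U := by
        intro x hx
        rw [hUdef, mem_iUnion]
        exact ⟨0, by simpa using hx⟩
      have : μ U = 0 := by
        have := h
        rwa [ae_eq_empty] at this
      exact measure_mono_null hsub this
    · rw [ae_eq_univ] at h
      rw [ae_iff]
      exact h
  filter_upwards [hU1] with x hx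
  rw [hUdef, mem_iUnion] at hx
  obtain ⟨m, hm⟩ := hx
  rw [mem_preimage, mem_compl_iff, hEgdef, mem_setOf_eq] at hm
  push_neg at hm
  -- Birkhoff sums of `f` grow at most like `β₀ n + C`
  set C := birkhoffSum T f m x - β₀ * m with hCdef
  have hgrow : ∀ n, m ≤ n → birkhoffSum T f n x ≤ C + β₀ * n := by
    intro n hn
    obtain ⟨k, rfl⟩ := Nat.exists_eq_add_of_le hn
    have h1 : birkhoffSum T f (m + k) x
        = birkhoffSum T f m x + birkhoffSum T f k (T^[m] x) := birkhoffSum_add T f m k x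
    have h2 : birkhoffSum T g k (T^[m] x) ≤ 0 := hm k
    rw [hSg] at h2
    push_cast
    rw [h1]
    have : birkhoffSum T f k (T^[m] x) ≤ k * β₀ := by linarith
    rw [hCdef]
    push_cast
    nlinarith [this]
  have hlim : Tendsto (fun n : ℕ => β₀ + C / n) atTop (𝓝 (β₀ + 0)) :=
    tendsto_const_nhds.add (tendsto_const_div_atTop_nhds_zero_nat C)
  rw [add_zero] at hlim
  filter_upwards [hlim.eventually_lt_const hβ₀2, eventually_ge_atTop m,
    eventually_ge_atTop 1] with n h1 h2 h3
  have hn0 : (0:ℝ) < n := by exact_mod_cast h3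
  have : birkhoffSum T f n x / n ≤ β₀ + C / n := by
    rw [div_le_iff₀ hn0]
    have h4 := hgrow n h2
    have h5 : C / (n:ℝ) * n = C := div_mul_cancel₀ C hn0.ne'
    nlinarith [h4, h5]
  linarith

/-- Pointwise Birkhoff ergodic theorem for an ergodic map. -/
lemma ae_tendsto_birkhoff [IsProbabilityMeasure μ] (hT : Ergodic T μ) (hf : Measurable f)
    (hfi : Integrable f μ) :
    ∀ᵐ x ∂μ, Tendsto (fun n => birkhoffSum T f n x / n) atTop (𝓝 (∫ x, f x ∂μ)) := by
  have hneg : ∀ n x, birkhoffSum T (fun y => -f y) n x = -birkhoffSum T f n x := by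
    intro n x
    simp [birkhoffSum, Finset.sum_neg_distrib]
  have hupper : ∀ᵐ x ∂μ, ∀ q : ℚ, (∫ x, f x ∂μ) < q →
      ∀ᶠ n in atTop, birkhoffSum T f n x / n < q := by
    rw [ae_all_iff]
    intro q
    by_cases hq : (∫ x, f x ∂μ) < (q : ℝ)
    · filter_upwards [eventually_div_lt hT hf hfi hq] with x hx _
      exact hx
    · filter_upwards with x h
      exact absurd h hq
  have hlower : ∀ᵐ x ∂μ, ∀ q : ℚ, (q : ℝ) < (∫ x, f x ∂μ) →
      ∀ᶠ n in atTop, (q : ℝ) < birkhoffSum T f n x / n := by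
    rw [ae_all_iff]
    intro q
    by_cases hq : (q : ℝ) < (∫ x, f x ∂μ)
    · have hq' : ∫ x, (fun y => -f y) x ∂μ < -q := by
        rw [integral_neg]
        linarith
      filter_upwards [eventually_div_lt hT hf.neg hfi.neg hq'] with x hx _
      filter_upwards [hx] with n hn
      rw [show birkhoffSum T (-f) n x = -birkhoffSum T f n x from hneg n x] at hn
      have : -(birkhoffSum T f n x / n) < -(q:ℝ) := by
        rw [← neg_div]
        exact hn
      linarith
    · filter_upwards with x h
      exact absurd h hq
  filter_upwards [hupper, hlower] with x hup hlow
  rw [tendsto_order]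
  constructor
  · intro b hb
    obtain ⟨q, hq1, hq2⟩ := exists_rat_btwn hb
    filter_upwards [hlow q hq2] with n hn
    exact lt_trans hq1 hn
  · intro b hb
    obtain ⟨q, hq1, hq2⟩ := exists_rat_btwn hb
    filter_upwards [hup q hq1] with n hn
    exact lt_trans hn hq2

end Stmt10Aux

theorem stmt10 {X : Type*} [MeasurableSpace X] (μ : Measure X)
    [IsProbabilityMeasure μ] (T : X → X) (hT : Ergodic T μ)
    (A : Set X) (hA : MeasurableSet A) :
    ∀ θ γ τ : ℝ, 0 < θ → 0 < γ → 0 < τ →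
      ∃ N : ℕ, ∃ Z : Set X, MeasurableSet Z ∧ 1 - ENNReal.ofReal γ < μ Z ∧
        ∀ M L : ℕ, N < M → N < L → τ < (L : ℝ) / (M : ℝ) →
          ∀ x ∈ Z,
            |(1 / (L : ℝ)) * ∑ j ∈ Finset.Icc M (M + L),
                A.indicator (fun _ => (1 : ℝ)) (T^[j] x) - (μ A).toReal| < θ := by
  intro θ γ τ hθ hγ hτ
  set f : X → ℝ := A.indicator (fun _ => (1:ℝ)) with hfdef
  have hfmeas : Measurable f := measurable_const.indicator hA
  have hfi : Integrable f μ := (integrable_const (1:ℝ)).indicator hA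
  set c : ℝ := (μ A).toReal with hcdef
  have hint : ∫ x, f x ∂μ = c := by
    rw [hfdef, integral_indicator_const (1:ℝ) hA, smul_eq_mul, mul_one]
    rfl
  have hc0 : 0 ≤ c := ENNReal.toReal_nonneg
  have hc1 : c ≤ 1 := by
    rw [hcdef]
    calc (μ A).toReal ≤ (1 : ENNReal).toReal := ENNReal.toReal_mono ENNReal.one_ne_top prob_le_one
    _ = 1 := by simp
  -- Egorov: uniform convergence off a small set
  have htendsto := Stmt10Aux.ae_tendsto_birkhoff hT hfmeas hfi
  set ε : ℝ := min (γ/2) 2⁻¹ with hεdef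
  have hε : 0 < ε := lt_min (by linarith) (by norm_num)
  obtain ⟨t, htm, htμ, hunif⟩ := tendstoUniformlyOn_of_ae_tendsto'
    (f := fun n x => birkhoffSum T f n x / n) (g := fun _ => ∫ x, f x ∂μ)
    (fun n => ((Stmt10Aux.measurable_birkhoffSum hT.measurable hfmeas n).div_const
      (n : ℝ)).stronglyMeasurable)
    stronglyMeasurable_const htendsto hε
  have hμtγ : μ t < ENNReal.ofReal γ := by
    refine lt_of_le_of_lt (htμ.trans (ENNReal.ofReal_le_ofReal (min_le_left _ _))) ?_
    exact (ENNReal.ofReal_lt_ofReal_iff hγ).mpr (by linarith)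
  have hμZ : 1 - ENNReal.ofReal γ < μ tᶜ := by
    rw [prob_compl_eq_one_sub htm]
    rcases le_or_gt (ENNReal.ofReal γ) 1 with hab | hab
    · rw [ENNReal.sub_lt_iff_lt_right ENNReal.ofReal_ne_top hab]
      calc (1:ENNReal) = (1 - μ t) + μ t := (tsub_add_cancel_of_le prob_le_one).symm
      _ < (1 - μ t) + ENNReal.ofReal γ := ENNReal.add_lt_add_left (by
            exact ne_top_of_le_ne_top ENNReal.one_ne_top tsub_le_self) hμtγ
    · rw [tsub_eq_zero_of_le hab.le]
      rw [tsub_pos_iff_lt]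
      calc μ t ≤ ENNReal.ofReal ε := htμ
      _ ≤ ENNReal.ofReal 2⁻¹ := ENNReal.ofReal_le_ofReal (min_le_right _ _)
      _ < 1 := by
          rw [show (1:ENNReal) = ENNReal.ofReal 1 by simp]
          exact (ENNReal.ofReal_lt_ofReal_iff one_pos).mpr (by norm_num)
  -- pick the uniformity threshold
  rw [Metric.tendstoUniformlyOn_iff] at hunif
  set ε₀ : ℝ := θ * τ / (4 * (τ + 1)) with hε₀def
  have hε₀ : 0 < ε₀ := by positivity
  obtain ⟨N₁, hN₁⟩ := (hunif ε₀ hε₀).exists_forall_of_atTop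
  set N : ℕ := max N₁ ⌈2/θ⌉₊ with hNdef
  refine ⟨N, tᶜ, htm.compl, hμZ, ?_⟩
  intro M L hM hL hratio x hx
  have hM0 : 0 < M := lt_of_le_of_lt (Nat.zero_le _) hM
  have hL0 : 0 < L := lt_of_le_of_lt (Nat.zero_le _) hL
  have hp0 : (0:ℝ) < (M:ℝ) := by exact_mod_cast hM0
  have hl0 : (0:ℝ) < (L:ℝ) := by exact_mod_cast hL0
  have hr0 : (0:ℝ) < ((M + L + 1 : ℕ):ℝ) := by positivity
  -- uniform estimates at the two endpoints
  have hbound : ∀ n : ℕ, N₁ ≤ n → |birkhoffSum T f n x / n - c| < ε₀ := by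
    intro n hn
    have := hN₁ n hn x hx
    rw [Real.dist_eq, hint] at this
    rw [abs_sub_comm]
    exact this
  -- rewrite the window sum
  have hsum : ∑ j ∈ Finset.Icc M (M + L), f (T^[j] x)
      = birkhoffSum T f (M + L + 1) x - birkhoffSum T f M x := by
    rw [show Finset.Icc M (M + L) = Finset.Ico M (M + L + 1) from (Finset.Ico_add_one_right_eq_Icc ..).symm]
    rw [Finset.sum_Ico_eq_sub _ (by omega)]
    rfl
  set a : ℝ := birkhoffSum T f (M + L + 1) x with hadef
  set b : ℝ := birkhoffSum T f M x with hbdef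
  set p : ℝ := (M : ℝ) with hpdef
  set l : ℝ := (L : ℝ) with hldef
  set r : ℝ := ((M + L + 1 : ℕ) : ℝ) with hrdef
  have hrpl : r = p + l + 1 := by rw [hrdef, hpdef, hldef]; push_cast; ring
  have hbM : |b / p - c| < ε₀ :=
    hbound M (le_of_lt (lt_of_le_of_lt (le_max_left _ _) hM))
  have hbR : |a / r - c| < ε₀ :=
    hbound (M + L + 1) (le_of_lt (lt_of_le_of_lt (le_max_left _ _)
      (lt_of_lt_of_le hM (by omega))))
  have hl1 : (1:ℝ) ≤ l := by rw [hldef]; exact_mod_cast hL0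
  have hgoal : (1 / l) * (a - b) - c = (r * (a / r - c) - p * (b / p - c) + c) / l := by
    field_simp
    rw [hrpl]
    ring
  have key : |(1 / l) * (a - b) - c| < θ := by
    rw [hgoal, abs_div, abs_of_pos hl0]
    have h1 : |r * (a / r - c) - p * (b / p - c) + c| ≤ r * ε₀ + p * ε₀ + 1 := by
      calc |r * (a / r - c) - p * (b / p - c) + c|
          ≤ |r * (a / r - c) - p * (b / p - c)| + |c| := abs_add_le _ _
      _ ≤ |r * (a / r - c)| + |p * (b / p - c)| + |c| := by
          have := abs_sub (r * (a / r - c)) (p * (b / p - c))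
          linarith
      _ ≤ r * ε₀ + p * ε₀ + 1 := by
          rw [abs_mul, abs_mul, abs_of_pos hr0, abs_of_pos hp0]
          have h2 : r * |a / r - c| ≤ r * ε₀ := mul_le_mul_of_nonneg_left hbR.le hr0.le
          have h3 : p * |b / p - c| ≤ p * ε₀ := mul_le_mul_of_nonneg_left hbM.le hp0.le
          have h4 : |c| ≤ 1 := by rw [abs_of_nonneg hc0]; exact hc1
          linarith
    have hpτ : p * τ < l := by
      have h := (lt_div_iff₀ hp0).mp hratio
      linarith
    have hple : p ≤ l / τ := by
      rw [le_div_iff₀ hτ]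
      exact hpτ.le
    have h2θ : 2 < θ * l := by
      have hceil : (2/θ : ℝ) ≤ (⌈2/θ⌉₊ : ℝ) := Nat.le_ceil _
      have hNl : (⌈2/θ⌉₊ : ℝ) < l := by
        rw [hldef]
        exact_mod_cast lt_of_le_of_lt (le_max_right N₁ _) hL
      have : 2/θ < l := lt_of_le_of_lt hceil hNl
      have := (div_lt_iff₀ hθ).mp this
      linarith
    have hstep : (r * ε₀ + p * ε₀ + 1) < θ * l := by
      have hb1 : r * ε₀ + p * ε₀ = (2 * p + l + 1) * ε₀ := by rw [hrpl]; ring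
      have hb2 : (2 * p + l + 1) * ε₀ ≤ (2 * (l / τ) + l + l) * ε₀ := by
        apply mul_le_mul_of_nonneg_right _ hε₀.le
        linarith
      have hb3 : (2 * (l / τ) + l + l) * ε₀ = θ * l / 2 := by
        rw [hε₀def]
        field_simp
        ring
      have hb4 : (1:ℝ) < θ * l / 2 := by linarith
      linarith
    calc |r * (a / r - c) - p * (b / p - c) + c| / l ≤ (r * ε₀ + p * ε₀ + 1) / l := by
          gcongr
    _ < θ := by
        rw [div_lt_iff₀ hl0]
        linarith [hstep]
  rw [hsum]
  exact key
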